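/- Let T ≥ 2 be a natural number. Then (T : ℝ) · (1 − 1/T)^{T−1} = (T−1) · (1 − 1/T)^{T−2}, and moreover for every natural number k ≥ 1, (k : ℝ) · (1 − 1/T)^{k−1} ≤ T · (1 − 1/T)^{T−1}. That is, among positive integers k, the function k ↦ k(1−1/T)^{k−1} is maximized at both k = T−1 and k = T, and these two choices yield equal values. -/

import Mathlib

/-- for `T ≥ 2`, `T·(1−1/T)^{T−1} = (T−1)·(1−1/T)^{T−2}`, and for
every integer `k ≥ 1`, `k·(1−1/T)^{k−1} ≤ T·(1−1/T)^{T−1}`: among positive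
integers, `k ↦ k(1−1/T)^{k−1}` is maximized at both `k = T−1` and `k = T`,
which yield equal values. -/
theorem integer_maximizers (T : ℕ) (hT : 2 ≤ T) :
    (T : ℝ) * (1 - 1 / (T : ℝ)) ^ (T - 1) =
      ((T : ℝ) - 1) * (1 - 1 / (T : ℝ)) ^ (T - 2) ∧
    ∀ k : ℕ, 1 ≤ k →
      (k : ℝ) * (1 - 1 / (T : ℝ)) ^ (k - 1) ≤ (T : ℝ) * (1 - 1 / (T : ℝ)) ^ (T - 1) := by
  have hT0 : (0:ℝ) < T := by positivity
  set x : ℝ := 1 - 1 / (T : ℝ) with hxdef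
  have hx : x = ((T:ℝ) - 1) / T := by
    rw [hxdef, eq_div_iff hT0.ne', sub_mul, div_mul_cancel₀ _ hT0.ne', one_mul]
  have hx0 : 0 ≤ x := by
    rw [hx]
    apply div_nonneg _ hT0.le
    have : (2:ℝ) ≤ T := by exact_mod_cast hT
    linarith
  -- the shifted function g m = (m+1) * x^m
  set g : ℕ → ℝ := fun m => ((m:ℝ) + 1) * x ^ m with hg
  have step_up : ∀ m : ℕ, m + 2 ≤ T → g m ≤ g (m + 1) := by
    intro m hm
    have hmT : ((m:ℝ) + 2) ≤ T := by exact_mod_cast hm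
    have key : ((m:ℝ) + 1) ≤ ((m:ℝ) + 2) * x := by
      rw [hx, ← mul_div_assoc, le_div_iff₀ hT0]
      nlinarith
    have : ((m:ℝ) + 1) * x ^ m ≤ (((m:ℝ) + 2) * x) * x ^ m :=
      mul_le_mul_of_nonneg_right key (pow_nonneg hx0 m)
    simp only [hg]
    push_cast
    calc ((m:ℝ) + 1) * x ^ m ≤ (((m:ℝ) + 2) * x) * x ^ m := this
      _ = ((m:ℝ) + 1 + 1) * x ^ (m + 1) := by ring
  have step_down : ∀ m : ℕ, T ≤ m + 2 → g (m + 1) ≤ g m := by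
    intro m hm
    have hmT : (T:ℝ) ≤ (m:ℝ) + 2 := by exact_mod_cast hm
    have key : ((m:ℝ) + 2) * x ≤ ((m:ℝ) + 1) := by
      rw [hx, ← mul_div_assoc, div_le_iff₀ hT0]
      nlinarith
    have : (((m:ℝ) + 2) * x) * x ^ m ≤ ((m:ℝ) + 1) * x ^ m :=
      mul_le_mul_of_nonneg_right key (pow_nonneg hx0 m)
    simp only [hg]
    push_cast
    calc ((m:ℝ) + 1 + 1) * x ^ (m + 1) = (((m:ℝ) + 2) * x) * x ^ m := by ring
      _ ≤ ((m:ℝ) + 1) * x ^ m := this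
  have chain_down : ∀ d : ℕ, g (T - 1 + d) ≤ g (T - 1) := by
    intro d
    induction d with
    | zero => simp
    | succ d ih =>
      have h1 : T - 1 + (d + 1) = (T - 1 + d) + 1 := by omega
      rw [h1]
      exact le_trans (step_down (T - 1 + d) (by omega)) ih
  have chain_up : ∀ d : ℕ, g (T - 1 - d) ≤ g (T - 1) := by
    intro d
    induction d with
    | zero => simp
    | succ d ih =>
      by_cases h : d + 1 ≤ T - 1
      · have h1 : (T - 1 - (d + 1)) + 1 = T - 1 - d := by omega
        have h2 : (T - 1 - (d + 1)) + 2 ≤ T := by omega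
        calc g (T - 1 - (d + 1)) ≤ g ((T - 1 - (d + 1)) + 1) := step_up _ h2
          _ = g (T - 1 - d) := by rw [h1]
          _ ≤ g (T - 1) := ih
      · have h1 : T - 1 - (d + 1) = T - 1 - d := by omega
        rw [h1]; exact ih
  have hmax : ∀ m : ℕ, g m ≤ g (T - 1) := by
    intro m
    by_cases h : m ≤ T - 1
    · have : m = T - 1 - (T - 1 - m) := by omega
      rw [this]; exact chain_up _
    · have : m = T - 1 + (m - (T - 1)) := by omega
      rw [this]; exact chain_down _
  have hgT : g (T - 1) = (T : ℝ) * x ^ (T - 1) := by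
    simp only [hg]
    congr 1
    have : ((T - 1 : ℕ) : ℝ) = (T : ℝ) - 1 := by
      have h1 : 1 ≤ T := by omega
      push_cast [h1]; ring
    rw [this]; ring
  constructor
  · -- equality part
    have h1 : T - 1 = (T - 2) + 1 := by omega
    rw [h1, pow_succ]
    have hTx : (T : ℝ) * x = (T : ℝ) - 1 := by
      rw [hx]; field_simp
    calc (T:ℝ) * (x ^ (T-2) * x) = ((T:ℝ) * x) * x ^ (T-2) := by ring
      _ = ((T:ℝ) - 1) * x ^ (T-2) := by rw [hTx]
  · intro k hk
    have hk1 : (k - 1) + 1 = k := by omega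
    have : (k : ℝ) * x ^ (k - 1) = g (k - 1) := by
      simp only [hg]
      congr 1
      have : ((k - 1 : ℕ) : ℝ) = (k : ℝ) - 1 := by push_cast [hk]; ring
      rw [this]; ring
    rw [this, ← hgT]
    exact hmax _
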